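/- Let n = 2p+1 and let Δ denote the radial Laplacian on ℝⁿ acting on spherically symmetric functions, i.e., (Δg)(r) = g''(r) + ((n-1)/r)·g'(r). Then for all i ≥ 0 and r > 0, (I − Δ)ψ_i(r) = 2(p−i)·ψ_{i+1}(r), where ψ_0(r) = e^{-r} and ψ_{i+1}(r) = -(1/r)ψ_i'(r). -/

import Mathlib

/-- ψ₀(r) = e^{-r}, ψ_{i+1}(r) = -(1/r)·ψ_i'(r). -/
noncomputable def psi : ℕ → ℝ → ℝ
  | 0 => fun r => Real.exp (-r)
  | (i+1) => fun r => -(1/r) * deriv (psi i) r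

/-- The radial Laplacian on ℝⁿ, n = 2p+1: (Δg)(r) = g''(r) + ((n-1)/r)·g'(r). -/
noncomputable def radialLaplacian (p : ℕ) (g : ℝ → ℝ) : ℝ → ℝ :=
  fun r => deriv (deriv g) r + ((2 * (p : ℝ) + 1 - 1) / r) * deriv g r

lemma psi_smooth (i : ℕ) : ContDiffOn ℝ ⊤ (psi i) (Set.Ioi (0:ℝ)) := by
  induction i with
  | zero =>
      exact (Real.contDiff_exp.comp (contDiff_neg)).contDiffOn
  | succ i ih =>
      have hd : ContDiffOn ℝ ⊤ (deriv (psi i)) (Set.Ioi (0:ℝ)) :=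
        ih.deriv_of_isOpen isOpen_Ioi le_top
      have h1 : ContDiffOn ℝ ⊤ (fun r : ℝ => -(1/r)) (Set.Ioi (0:ℝ)) := by
        apply ContDiffOn.neg
        apply ContDiffOn.div contDiffOn_const contDiffOn_id
        intro x hx; exact ne_of_gt hx
      exact h1.mul hd

lemma psi_hasDerivAt (i : ℕ) (r : ℝ) (hr : 0 < r) :
    HasDerivAt (psi i) (-(r * psi (i+1) r)) r := by
  have hdiff : DifferentiableAt ℝ (psi i) r := by
    have := (psi_smooth i).contDiffAt (isOpen_Ioi.mem_nhds hr)
    exact this.differentiableAt (by simp)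
  have h := hdiff.hasDerivAt
  have hval : psi (i+1) r = -(1/r) * deriv (psi i) r := rfl
  have : -(r * psi (i+1) r) = deriv (psi i) r := by
    rw [hval]; field_simp
  rwa [this]

lemma psi_deriv_eventually (i : ℕ) (r : ℝ) (hr : 0 < r) :
    deriv (psi i) =ᶠ[nhds r] fun s => -(s * psi (i+1) s) := by
  filter_upwards [isOpen_Ioi.mem_nhds hr] with s hs
  exact (psi_hasDerivAt i s hs).deriv

lemma psi_rec (i : ℕ) (r : ℝ) (hr : 0 < r) :
    r^2 * psi (i+2) r = psi i r + (2*(i:ℝ)+1) * psi (i+1) r := by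
  induction i generalizing r hr with
  | zero =>
      have hd0 : deriv (psi 0) = fun s : ℝ => -Real.exp (-s) := by
        funext s
        have : HasDerivAt (psi 0) (-Real.exp (-s)) s := by
          have h := (hasDerivAt_neg s).exp; simp only [mul_neg, mul_one] at h; exact h
        exact this.deriv
      have hpsi1 : psi 1 = fun s : ℝ => (1/s) * Real.exp (-s) := by
        funext s; show -(1/s) * deriv (psi 0) s = _
        rw [hd0]; ring
      have hpsi1' : psi 1 r = (1/r) * Real.exp (-r) := by rw [hpsi1]
      have hd1 : deriv (psi 1) r
          = -(1/r^2) * Real.exp (-r) + (1/r) * (-Real.exp (-r)) := by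
        rw [hpsi1]
        have h1 : HasDerivAt (fun s : ℝ => 1/s) (-(1/r^2)) r := by
          simpa [one_div] using (hasDerivAt_inv (ne_of_gt hr))
        have h2 : HasDerivAt (fun s : ℝ => Real.exp (-s)) (-Real.exp (-r)) r := by
          have h := (hasDerivAt_neg r).exp; simp only [mul_neg, mul_one] at h; exact h
        exact (h1.mul h2).deriv
      have hpsi2 : psi 2 r = -(1/r) * deriv (psi 1) r := rfl
      have hpsi0 : psi 0 r = Real.exp (-r) := rfl
      rw [hpsi2, hd1, hpsi1', hpsi0]
      field_simp
      ring
  | succ i ih =>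
      -- differentiate the identity for i
      have h2 := psi_hasDerivAt (i+1) r hr
      have h3 := psi_hasDerivAt (i+2) r hr
      have h1 := psi_hasDerivAt i r hr
      have hL : HasDerivAt (fun s : ℝ => s^2 * psi (i+2) s)
          (2*r * psi (i+2) r + r^2 * (-(r * psi (i+3) r))) r := by
        have h := (hasDerivAt_pow 2 r).fun_mul h3
        refine h.congr_deriv ?_
        push_cast
        ring
      have hR : HasDerivAt (fun s : ℝ => psi i s + (2*(i:ℝ)+1) * psi (i+1) s)
          (-(r * psi (i+1) r) + (2*(i:ℝ)+1) * (-(r * psi (i+2) r))) r := by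
        exact h1.add (h2.const_mul _)
      have heq : (fun s : ℝ => s^2 * psi (i+2) s)
          =ᶠ[nhds r] (fun s : ℝ => psi i s + (2*(i:ℝ)+1) * psi (i+1) s) := by
        filter_upwards [isOpen_Ioi.mem_nhds hr] with s hs
        exact ih s hs
      have hL' := hL.congr_of_eventuallyEq heq.symm
      have hder := hR.unique hL'
      have hr' : (r:ℝ) ≠ 0 := ne_of_gt hr
      have key : r^2 * psi (i+3) r = psi (i+1) r + (2*(i:ℝ)+3) * psi (i+2) r := by
        have h := hder
        field_simp at h ⊢
        nlinarith [h]
      convert key using 2 <;> push_cast <;> ring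

theorem one_sub_laplacian_psi (p i : ℕ) (r : ℝ) (hr : 0 < r) :
    psi i r - radialLaplacian p (psi i) r = 2 * ((p : ℝ) - i) * psi (i+1) r := by
  have hd1 : deriv (psi i) r = -(r * psi (i+1) r) := (psi_hasDerivAt i r hr).deriv
  have hd2 : deriv (deriv (psi i)) r = -(psi (i+1) r) + r^2 * psi (i+2) r := by
    have heq := psi_deriv_eventually i r hr
    rw [heq.deriv_eq]
    have h2 : HasDerivAt (psi (i+1)) (-(r * psi (i+2) r)) r := psi_hasDerivAt (i+1) r hr
    have hmul : HasDerivAt (fun s : ℝ => s * psi (i+1) s)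
        (1 * psi (i+1) r + r * (-(r * psi (i+2) r))) r := (hasDerivAt_id' (x := r)).mul h2
    have := hmul.fun_neg
    rw [this.deriv]
    ring
  have hrec := psi_rec i r hr
  have hr' : (r:ℝ) ≠ 0 := ne_of_gt hr
  unfold radialLaplacian
  rw [hd1, hd2]
  field_simp
  nlinarith [hrec]
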